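/- arXiv:2207.09427 — 2 statements merged into one kernel-verified Lean document; each statement's English description precedes it below -/
import Mathlib

section
/- If H is a common graph (i.e., t(H,W) + t(H,1−W) ≥ 2^{1−e(H)} for every graphon W), then for every independent set I of H and every positive integer q, the q-book H_I^q is also common, i.e., t(H_I^q, W) + t(H_I^q, 1−W) ≥ 2^{1−e(H_I^q)} for every graphon W. -/
open MeasureTheory

abbrev unitI : Type := Set.Icc (0:ℝ) 1

structure Graphon where
  W : unitI → unitI → ℝ
  symm : ∀ x y, W x y = W y x
  measurable : Measurable fun p : unitI × unitI => W p.1 p.2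
  nonneg : ∀ x y, 0 ≤ W x y
  le_one : ∀ x y, W x y ≤ 1

def Graphon.compl (W : Graphon) : Graphon where
  W x y := 1 - W.W x y
  symm x y := by show 1 - W.W x y = 1 - W.W y x; rw [W.symm]
  measurable := measurable_const.sub W.measurable
  nonneg x y := by show 0 ≤ 1 - W.W x y; linarith [W.le_one x y]
  le_one x y := by show 1 - W.W x y ≤ 1; linarith [W.nonneg x y]

noncomputable def homDensity {V : Type} [Fintype V] (H : SimpleGraph V) (W : Graphon) : ℝ :=
  ∫ x : V → unitI,
    ∏ᶠ (e : Sym2 V) (_ : e ∈ H.edgeSet),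
      Sym2.lift ⟨fun u v => W.W (x u) (x v), fun u v => W.symm (x u) (x v)⟩ e

def IsCommon {V : Type} [Fintype V] (H : SimpleGraph V) : Prop :=
  ∀ W : Graphon,
    (2:ℝ) ^ (1 - (Nat.card H.edgeSet : ℤ)) ≤ homDensity H W + homDensity H W.compl

/-- Vertex set of the `q`-book of a graph on `V` along `I`. -/
abbrev BookVerts (V : Type) [DecidableEq V] (I : Finset V) (q : ℕ) : Type :=
  {v : V // v ∈ I} ⊕ (Fin q × {v : V // v ∉ I})

/-- The canonical embedding of the `j`-th page. -/
def bookEmb {V : Type} [DecidableEq V] (I : Finset V) (q : ℕ) (j : Fin q) (v : V) :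
    BookVerts V I q :=
  if h : v ∈ I then Sum.inl ⟨v, h⟩ else Sum.inr (j, ⟨v, h⟩)

lemma bookEmb_injective {V : Type} [DecidableEq V] (I : Finset V) (q : ℕ) (j : Fin q) :
    Function.Injective (bookEmb I q j) := by
  intro a b hab
  unfold bookEmb at hab
  split_ifs at hab with h1 h2 h2 <;> simp_all

/-- The `q`-book of `H` along `I`. -/
def book {V : Type} [DecidableEq V] (H : SimpleGraph V) (I : Finset V) (q : ℕ) :
    SimpleGraph (BookVerts V I q) where
  Adj a b := ∃ (j : Fin q) (u v : V), H.Adj u v ∧ a = bookEmb I q j u ∧ b = bookEmb I q j v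
  symm := ⟨by rintro a b ⟨j, u, v, h, ha, hb⟩; exact ⟨j, v, u, h.symm, hb, ha⟩⟩
  loopless := ⟨by
    rintro a ⟨j, u, v, h, ha, hb⟩
    exact (show H.Adj v v by rwa [bookEmb_injective I q j (ha.symm.trans hb ▸ rfl : bookEmb I q j u = bookEmb I q j v)] at h).ne rfl⟩

/-- `I` is an independent set of `H`. -/
def IndepIn {V : Type} (H : SimpleGraph V) (I : Finset V) : Prop :=
  ∀ u ∈ I, ∀ v ∈ I, ¬ H.Adj u v


/-! ### Auxiliary machinery -/

section Aux

open MeasureTheory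

noncomputable def edgeFun (W : Graphon) {α : Type*} (x : α → unitI) : Sym2 α → ℝ :=
  Sym2.lift ⟨fun u v => W.W (x u) (x v), fun u v => W.symm (x u) (x v)⟩

@[simp] lemma edgeFun_mk (W : Graphon) {α : Type*} (x : α → unitI) (u v : α) :
    edgeFun W x s(u, v) = W.W (x u) (x v) := rfl

lemma edgeFun_nonneg (W : Graphon) {α : Type*} (x : α → unitI) (e : Sym2 α) :
    0 ≤ edgeFun W x e := by
  induction e using Sym2.ind with | _ u v => exact W.nonneg _ _

lemma edgeFun_le_one (W : Graphon) {α : Type*} (x : α → unitI) (e : Sym2 α) :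
    edgeFun W x e ≤ 1 := by
  induction e using Sym2.ind with | _ u v => exact W.le_one _ _

lemma edgeFun_comp (W : Graphon) {α β : Type*} (g : α → β) (y : β → unitI) (e : Sym2 α) :
    edgeFun W y (e.map g) = edgeFun W (y ∘ g) e := by
  induction e using Sym2.ind with | _ u v => rw [Sym2.map_pair_eq]; rfl

lemma measurable_edgeFun (W : Graphon) {α : Type*} (e : Sym2 α) :
    Measurable fun x : α → unitI => edgeFun W x e := by
  induction e using Sym2.ind with
  | _ u v =>
    simp only [edgeFun_mk]
    have h : Measurable fun x : α → unitI =>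
        (fun p : unitI × unitI => W.W p.1 p.2) (x u, x v) :=
      W.measurable.comp ((measurable_pi_apply u).prodMk (measurable_pi_apply v))
    exact h

noncomputable def eProd (W : Graphon) {α : Type*} (s : Finset (Sym2 α)) (x : α → unitI) : ℝ :=
  ∏ e ∈ s, edgeFun W x e

lemma eProd_nonneg (W : Graphon) {α : Type*} (s : Finset (Sym2 α)) (x : α → unitI) :
    0 ≤ eProd W s x := Finset.prod_nonneg fun e _ => edgeFun_nonneg W x e

lemma eProd_le_one (W : Graphon) {α : Type*} (s : Finset (Sym2 α)) (x : α → unitI) :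
    eProd W s x ≤ 1 :=
  Finset.prod_le_one (fun e _ => edgeFun_nonneg W x e) fun e _ => edgeFun_le_one W x e

lemma measurable_eProd (W : Graphon) {α : Type*} (s : Finset (Sym2 α)) :
    Measurable (eProd W s) :=
  Finset.measurable_prod s fun e _ => measurable_edgeFun W e

lemma integrable_of_bdd {α : Type*} [MeasureSpace α] [IsFiniteMeasure (volume : Measure α)]
    {f : α → ℝ} {C : ℝ} (hm : AEStronglyMeasurable f volume) (hb : ∀ x, |f x| ≤ C) :
    Integrable f :=
  ⟨hm, HasFiniteIntegral.of_bounded (ae_of_all _ hb)⟩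

lemma abs_le_one_of_bounds {a : ℝ} (h0 : 0 ≤ a) (h1 : a ≤ 1) : |a| ≤ 1 := by
  rw [abs_of_nonneg h0]; exact h1

/-! #### the finite edge set -/

noncomputable def edgeFin {V : Type} [Fintype V] (H : SimpleGraph V) : Finset (Sym2 V) :=
  (Set.toFinite H.edgeSet).toFinset

lemma mem_edgeFin {V : Type} [Fintype V] {H : SimpleGraph V} {e : Sym2 V} :
    e ∈ edgeFin H ↔ e ∈ H.edgeSet := Set.Finite.mem_toFinset _

lemma card_edgeFin {V : Type} [Fintype V] (H : SimpleGraph V) :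
    Nat.card H.edgeSet = (edgeFin H).card := by
  rw [Nat.card_coe_set_eq, Set.ncard_eq_toFinset_card H.edgeSet (Set.toFinite _)]
  rfl

lemma homDensity_eq {V : Type} [Fintype V] (H : SimpleGraph V) (W : Graphon) :
    homDensity H W = ∫ x : V → unitI, eProd W (edgeFin H) x := by
  unfold homDensity eProd
  congr 1
  funext x
  rw [← Set.Finite.coe_toFinset (Set.toFinite H.edgeSet), finprod_mem_coe_finset]
  rfl

/-! #### Splitting along an independent set -/

variable {V : Type} [Fintype V] [DecidableEq V]

def combine (I : Finset V) (x : {v : V // v ∈ I} → unitI) (z : {v : V // v ∉ I} → unitI) :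
    V → unitI := fun v => if h : v ∈ I then x ⟨v, h⟩ else z ⟨v, h⟩

lemma measurable_combine (I : Finset V) :
    Measurable fun p : ({v : V // v ∈ I} → unitI) × ({v : V // v ∉ I} → unitI) =>
      combine I p.1 p.2 := by
  apply measurable_pi_lambda
  intro v
  by_cases h : v ∈ I
  · simpa [combine, h, Function.comp_def] using (measurable_pi_apply _).comp
      (measurable_fst : Measurable fun p : ({v : V // v ∈ I} → unitI) ×
        ({v : V // v ∉ I} → unitI) => p.1)
  · simpa [combine, h, Function.comp_def] using (measurable_pi_apply _).comp
      (measurable_snd : Measurable fun p : ({v : V // v ∈ I} → unitI) ×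
        ({v : V // v ∉ I} → unitI) => p.2)

lemma split_apply (I : Finset V) (x : {v : V // v ∈ I} → unitI)
    (z : {v : V // v ∉ I} → unitI) :
    (MeasurableEquiv.piCongrLeft (fun _ : V => unitI) (Equiv.sumCompl (· ∈ I)))
      ((MeasurableEquiv.sumPiEquivProdPi
        (fun _ : {v : V // v ∈ I} ⊕ {v : V // v ∉ I} => unitI)).symm (x, z))
      = combine I x z := by
  funext v
  obtain ⟨w, rfl⟩ : ∃ w, (Equiv.sumCompl (· ∈ I)) w = v :=
    ⟨(Equiv.sumCompl (· ∈ I)).symm v, (Equiv.sumCompl (· ∈ I)).apply_symm_apply v⟩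
  simp only [MeasurableEquiv.coe_piCongrLeft, MeasurableEquiv.coe_sumPiEquivProdPi_symm]
  rcases w with a | b
  · rw [Equiv.piCongrLeft_sumInl]
    simp [combine, Equiv.sumCompl_apply_inl, a.2]
  · rw [Equiv.piCongrLeft_sumInr]
    simp [combine, Equiv.sumCompl_apply_inr, b.2]

lemma homDensity_split (H : SimpleGraph V) (I : Finset V) (W : Graphon) :
    homDensity H W = ∫ x : {v : V // v ∈ I} → unitI, ∫ z : {v : V // v ∉ I} → unitI,
      eProd W (edgeFin H) (combine I x z) := by
  rw [homDensity_eq]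
  rw [← (volume_measurePreserving_piCongrLeft (fun _ : V => unitI)
    (Equiv.sumCompl (· ∈ I))).integral_comp']
  rw [← (volume_measurePreserving_sumPiEquivProdPi_symm
    (fun _ : {v : V // v ∈ I} ⊕ {v : V // v ∉ I} => unitI)).integral_comp']
  have h1 : (fun p : ({v : V // v ∈ I} → unitI) × ({v : V // v ∉ I} → unitI) =>
      eProd W (edgeFin H)
        ((MeasurableEquiv.piCongrLeft (fun _ : V => unitI) (Equiv.sumCompl (· ∈ I)))
          ((MeasurableEquiv.sumPiEquivProdPi
            (fun _ : {v : V // v ∈ I} ⊕ {v : V // v ∉ I} => unitI)).symm p)))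
      = fun p => eProd W (edgeFin H) (combine I p.1 p.2) := by
    funext p
    obtain ⟨x, z⟩ := p
    rw [split_apply]
  rw [h1, Measure.volume_eq_prod, integral_prod]
  exact integrable_of_bdd
    (((measurable_eProd W _).comp (measurable_combine I)).aestronglyMeasurable)
    fun p => abs_le_one_of_bounds (eProd_nonneg _ _ _) (eProd_le_one _ _ _)

/-! #### Page integral -/

def pageEquiv (q : ℕ) (β : Type*) : (Fin q × β) ⊕ β ≃ Fin (q+1) × β where
  toFun := Sum.elim (fun p => (p.1.castSucc, p.2)) (fun b => (Fin.last q, b))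
  invFun p := if h : p.1 = Fin.last q then .inr p.2
    else .inl (⟨p.1.val, Fin.val_lt_last h⟩, p.2)
  left_inv p := by
    rcases p with ⟨j, b⟩ | b
    · have : j.castSucc ≠ Fin.last q := by
        intro h; exact absurd (congrArg Fin.val h) (by simp; omega)
      simp [this]
    · simp
  right_inv p := by
    rcases p with ⟨j, b⟩
    by_cases h : j = Fin.last q
    · simp [h]
    · simp only [Sum.elim_inl, dif_neg h]
      exact Prod.ext (Fin.ext rfl) rfl

lemma pageIntegral {β : Type*} [Fintype β] (G : (β → unitI) → ℝ) (q : ℕ) :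
    ∫ w : Fin q × β → unitI, ∏ j : Fin q, G (fun b => w (j, b))
      = (∫ z : β → unitI, G z) ^ q := by
  induction q with
  | zero => simp
  | succ q ih =>
    rw [← (volume_measurePreserving_piCongrLeft (fun _ : Fin (q+1) × β => unitI)
      (pageEquiv q β)).integral_comp']
    rw [← (volume_measurePreserving_sumPiEquivProdPi_symm
      (fun _ : (Fin q × β) ⊕ β => unitI)).integral_comp']
    have key : ∀ p : ((Fin q × β) → unitI) × (β → unitI),
        (∏ j : Fin (q+1), G (fun b =>
          (MeasurableEquiv.piCongrLeft (fun _ : Fin (q+1) × β => unitI) (pageEquiv q β))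
            ((MeasurableEquiv.sumPiEquivProdPi (fun _ : (Fin q × β) ⊕ β => unitI)).symm p)
            (j, b)))
        = (∏ j : Fin q, G (fun b => p.1 (j, b))) * G p.2 := by
      rintro ⟨u, v⟩
      have hpt : ∀ i : (Fin q × β) ⊕ β,
          (MeasurableEquiv.piCongrLeft (fun _ : Fin (q+1) × β => unitI) (pageEquiv q β))
            ((MeasurableEquiv.sumPiEquivProdPi (fun _ : (Fin q × β) ⊕ β => unitI)).symm (u, v))
            (pageEquiv q β i) = Sum.elim u v i := by
        intro i
        simp only [MeasurableEquiv.coe_piCongrLeft, MeasurableEquiv.coe_sumPiEquivProdPi_symm]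
        rcases i with p | b
        · simpa using Equiv.piCongrLeft_sumInl
            (fun _ : Fin (q+1) × β => unitI) (pageEquiv q β) u v p
        · simpa using Equiv.piCongrLeft_sumInr
            (fun _ : Fin (q+1) × β => unitI) (pageEquiv q β) u v b
      rw [Fin.prod_univ_castSucc]
      congr 1
      · refine Finset.prod_congr rfl fun j _ => ?_
        congr 1; funext b
        exact hpt (Sum.inl (j, b))
      · congr 1; funext b
        exact hpt (Sum.inr b)
    simp only [key]
    rw [Measure.volume_eq_prod,
      integral_prod_mul (f := fun u : (Fin q × β) → unitI => ∏ j : Fin q, G fun b => u (j, b))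
        (g := G), ih, pow_succ]

/-! #### Edges of the book -/

section Book

variable (H : SimpleGraph V) (I : Finset V) (q : ℕ)

lemma bookEmb_eq {j j' : Fin q} {a b : V}
    (h : bookEmb I q j a = bookEmb I q j' b) : a = b ∧ (a ∈ I ∨ j = j') := by
  unfold bookEmb at h
  split_ifs at h with h1 h2 h2 <;> simp_all

lemma emb2_inj (hI : IndepIn H I) : ∀ p ∈ Finset.univ ×ˢ edgeFin H,
    ∀ p' ∈ Finset.univ ×ˢ edgeFin H,
    p.2.map (bookEmb I q p.1) = p'.2.map (bookEmb I q p'.1) → p = p' := by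
  rintro ⟨j, e⟩ hp ⟨j', e'⟩ hp' h
  simp only [Finset.mem_product, Finset.mem_univ, true_and, mem_edgeFin] at hp hp'
  obtain ⟨⟨u, v⟩, rfl⟩ := e.exists_rep
  obtain ⟨⟨u', v'⟩, rfl⟩ := e'.exists_rep
  have hadj : H.Adj u v := (SimpleGraph.mem_edgeSet H).1 hp
  rw [Sym2.map_pair_eq, Sym2.map_pair_eq, Sym2.eq_iff] at h
  by_cases hjj : j = j'
  · subst hjj
    refine Prod.ext rfl ?_
    simp only
    rcases h with ⟨h1, h2⟩ | ⟨h1, h2⟩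
    · rw [(bookEmb_eq I q h1).1, (bookEmb_eq I q h2).1]
    · rw [(bookEmb_eq I q h1).1, (bookEmb_eq I q h2).1]
      exact Sym2.eq_swap
  · exfalso
    rcases h with ⟨h1, h2⟩ | ⟨h1, h2⟩ <;>
      exact hI u ((bookEmb_eq I q h1).2.resolve_right hjj)
        v ((bookEmb_eq I q h2).2.resolve_right hjj) hadj

lemma book_edgeFin_eq :
    edgeFin (book H I q) = Finset.image (fun p : Fin q × Sym2 V => p.2.map (bookEmb I q p.1))
      (Finset.univ ×ˢ edgeFin H) := by
  ext e
  simp only [mem_edgeFin, Finset.mem_image, Finset.mem_product, Finset.mem_univ, true_and]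
  constructor
  · intro he
    obtain ⟨⟨a, b⟩, rfl⟩ := e.exists_rep
    obtain ⟨j, u, v, huv, rfl, rfl⟩ := (SimpleGraph.mem_edgeSet (book H I q)).1 he
    exact ⟨(j, s(u, v)), (SimpleGraph.mem_edgeSet H).2 huv,
      by rw [Sym2.map_pair_eq]⟩
  · rintro ⟨⟨j, e'⟩, he', rfl⟩
    obtain ⟨⟨u, v⟩, rfl⟩ := e'.exists_rep
    rw [Sym2.map_pair_eq]
    exact (SimpleGraph.mem_edgeSet (book H I q)).2
      ⟨j, u, v, (SimpleGraph.mem_edgeSet H).1 he', rfl, rfl⟩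

lemma card_book_edges (hI : IndepIn H I) :
    Nat.card (book H I q).edgeSet = q * Nat.card H.edgeSet := by
  rw [card_edgeFin, card_edgeFin, book_edgeFin_eq,
    Finset.card_image_of_injOn (emb2_inj H I q hI), Finset.card_product, Finset.card_univ]
  simp

lemma book_eProd (hI : IndepIn H I) (W : Graphon) (y : BookVerts V I q → unitI) :
    eProd W (edgeFin (book H I q)) y
      = ∏ j : Fin q, eProd W (edgeFin H) (y ∘ bookEmb I q j) := by
  unfold eProd
  rw [book_edgeFin_eq, Finset.prod_image (emb2_inj H I q hI), Finset.prod_product]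
  exact Finset.prod_congr rfl fun j _ => Finset.prod_congr rfl fun e _ => edgeFun_comp W _ y e

lemma book_split_apply (x : {v : V // v ∈ I} → unitI) (w : Fin q × {v : V // v ∉ I} → unitI)
    (j : Fin q) :
    ((MeasurableEquiv.sumPiEquivProdPi (fun _ : BookVerts V I q => unitI)).symm (x, w))
        ∘ bookEmb I q j
      = combine I x (fun b => w (j, b)) := by
  funext v
  simp only [Function.comp_apply, MeasurableEquiv.coe_sumPiEquivProdPi_symm]
  unfold bookEmb combine
  by_cases h : v ∈ I
  · simp only [dif_pos h]
    rfl
  · simp only [dif_neg h]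
    rfl

lemma homDensity_book (hI : IndepIn H I) (W : Graphon) :
    homDensity (book H I q) W = ∫ x : {v : V // v ∈ I} → unitI,
      (∫ z : {v : V // v ∉ I} → unitI, eProd W (edgeFin H) (combine I x z)) ^ q := by
  rw [homDensity_eq]
  rw [← (volume_measurePreserving_sumPiEquivProdPi_symm
    (fun _ : BookVerts V I q => unitI)).integral_comp']
  have h1 : (fun p : ({v : V // v ∈ I} → unitI) × (Fin q × {v : V // v ∉ I} → unitI) =>
      eProd W (edgeFin (book H I q))
        ((MeasurableEquiv.sumPiEquivProdPi (fun _ : BookVerts V I q => unitI)).symm p))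
      = fun p => ∏ j : Fin q,
          eProd W (edgeFin H) (combine I p.1 (fun b => p.2 (j, b))) := by
    funext p
    obtain ⟨x, w⟩ := p
    rw [book_eProd H I q hI]
    exact Finset.prod_congr rfl fun j _ => by rw [book_split_apply]
  rw [h1, Measure.volume_eq_prod, integral_prod]
  · exact integral_congr_ae (ae_of_all _ fun x => pageIntegral
      (fun z => eProd W (edgeFin H) (combine I x z)) q)
  · refine integrable_of_bdd (C := 1) ?_ ?_
    · refine (Finset.measurable_prod Finset.univ fun j _ => ?_).aestronglyMeasurable
      have hc : Measurable fun p : ({v : V // v ∈ I} → unitI) ×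
          (Fin q × {v : V // v ∉ I} → unitI) => (p.1, fun b => p.2 (j, b)) :=
        measurable_fst.prodMk (measurable_pi_lambda _ fun b =>
          (measurable_pi_apply (j, b)).comp measurable_snd)
      have h2 : Measurable fun p : ({v : V // v ∈ I} → unitI) ×
          (Fin q × {v : V // v ∉ I} → unitI) =>
          combine I p.1 (fun b => p.2 (j, b)) := (measurable_combine I).comp hc
      exact (measurable_eProd W (edgeFin H)).comp h2
    · intro p
      refine abs_le_one_of_bounds (Finset.prod_nonneg fun j _ => eProd_nonneg _ _ _)
        (Finset.prod_le_one (fun j _ => eProd_nonneg _ _ _) fun j _ => eProd_le_one _ _ _)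

end Book

/-! #### Analytic inequalities -/

lemma two_zpow_mul_add_pow_le {a b : ℝ} (ha : 0 ≤ a) (hb : 0 ≤ b) (q : ℕ) :
    (2:ℝ) ^ ((1:ℤ) - q) * (a + b) ^ q ≤ a ^ q + b ^ q := by
  have hc := (convexOn_pow (𝕜 := ℝ) q).2 (Set.mem_Ici.2 ha) (Set.mem_Ici.2 hb)
    (by norm_num : (0:ℝ) ≤ 1/2) (by norm_num : (0:ℝ) ≤ 1/2) (by norm_num)
  simp only [smul_eq_mul] at hc
  have h1 : (1/2 : ℝ) * a + 1/2 * b = (a + b)/2 := by ring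
  rw [h1, div_pow] at hc
  have h2 : (2:ℝ) ^ ((1:ℤ) - q) = 2 / 2 ^ q := by
    rw [zpow_sub₀ (by norm_num : (2:ℝ) ≠ 0), zpow_one, zpow_natCast]
  rw [h2, div_mul_eq_mul_div, div_le_iff₀ (by positivity : (0:ℝ) < 2 ^ q)]
  rw [div_le_iff₀ (by positivity : (0:ℝ) < 2 ^ q)] at hc
  nlinarith [pow_pos (by norm_num : (0:ℝ) < 2) q]

lemma final_ineq {α : Type*} [MeasureSpace α] [IsProbabilityMeasure (volume : Measure α)]
    (f g : α → ℝ) (hfm : StronglyMeasurable f) (hgm : StronglyMeasurable g)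
    (hf0 : ∀ x, 0 ≤ f x) (hf1 : ∀ x, f x ≤ 1) (hg0 : ∀ x, 0 ≤ g x) (hg1 : ∀ x, g x ≤ 1)
    (q E : ℕ) (h : (2:ℝ) ^ (1 - (E:ℤ)) ≤ (∫ x, f x) + ∫ x, g x) :
    (2:ℝ) ^ (1 - ((q * E : ℕ) : ℤ)) ≤ (∫ x, f x ^ q) + ∫ x, g x ^ q := by
  have hfi : Integrable f :=
    integrable_of_bdd hfm.aestronglyMeasurable fun x => abs_le_one_of_bounds (hf0 x) (hf1 x)
  have hgi : Integrable g :=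
    integrable_of_bdd hgm.aestronglyMeasurable fun x => abs_le_one_of_bounds (hg0 x) (hg1 x)
  have hfqi : Integrable fun x => f x ^ q :=
    integrable_of_bdd (C := 1) ((hfm.measurable.pow_const q).aestronglyMeasurable)
      fun x => abs_le_one_of_bounds (pow_nonneg (hf0 x) q) (pow_le_one₀ (hf0 x) (hf1 x))
  have hgqi : Integrable fun x => g x ^ q :=
    integrable_of_bdd (C := 1) ((hgm.measurable.pow_const q).aestronglyMeasurable)
      fun x => abs_le_one_of_bounds (pow_nonneg (hg0 x) q) (pow_le_one₀ (hg0 x) (hg1 x))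
  have hpow : Integrable fun x => (f x + g x) ^ q :=
    integrable_of_bdd (C := 2 ^ q)
      (((hfm.measurable.add hgm.measurable).pow_const q).aestronglyMeasurable)
      fun x => by
        rw [abs_of_nonneg (pow_nonneg (add_nonneg (hf0 x) (hg0 x)) q)]
        exact pow_le_pow_left₀ (add_nonneg (hf0 x) (hg0 x)) (by linarith [hf1 x, hg1 x]) q
  have hS : (2:ℝ) ^ (1 - (E:ℤ)) ≤ ∫ x, (f x + g x) := by
    rw [integral_add hfi hgi]; exact h
  have hJ : (∫ x, (f x + g x)) ^ q ≤ ∫ x, (f x + g x) ^ q := by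
    have := (convexOn_pow (𝕜 := ℝ) q).map_integral_le (μ := volume)
      ((continuous_pow q).continuousOn) isClosed_Ici
      (ae_of_all _ fun x => Set.mem_Ici.2 (add_nonneg (hf0 x) (hg0 x)))
      (hfi.add hgi) hpow
    exact this
  calc (2:ℝ) ^ (1 - ((q * E : ℕ) : ℤ))
      = 2 ^ ((1:ℤ) - q) * ((2:ℝ) ^ (1 - (E:ℤ))) ^ q := by
        rw [← zpow_natCast ((2:ℝ) ^ (1 - (E:ℤ))) q, ← zpow_mul,
          ← zpow_add₀ (by norm_num : (2:ℝ) ≠ 0)]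
        congr 1
        push_cast
        ring
    _ ≤ 2 ^ ((1:ℤ) - q) * (∫ x, (f x + g x)) ^ q :=
        mul_le_mul_of_nonneg_left (pow_le_pow_left₀ (by positivity) hS q) (by positivity)
    _ ≤ 2 ^ ((1:ℤ) - q) * ∫ x, (f x + g x) ^ q :=
        mul_le_mul_of_nonneg_left hJ (by positivity)
    _ = ∫ x, 2 ^ ((1:ℤ) - q) * (f x + g x) ^ q := by rw [← integral_const_mul]
    _ ≤ ∫ x, (f x ^ q + g x ^ q) :=
        integral_mono (hpow.const_mul _) (hfqi.add hgqi)
          fun x => two_zpow_mul_add_pow_le (hf0 x) (hg0 x) q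
    _ = (∫ x, f x ^ q) + ∫ x, g x ^ q := integral_add hfqi hgqi

end Aux

/-- if `H` is common, then so is every `q`-book of `H` along an
independent set. -/
theorem book_isCommon {V : Type} [Fintype V] [DecidableEq V]
    (H : SimpleGraph V) (hH : IsCommon H) (I : Finset V) (hI : IndepIn H I)
    (q : ℕ) (hq : 0 < q) :
    IsCommon (book H I q) := by
  intro W
  have hQ : ∀ U : Graphon, Measurable (fun p : ({v : V // v ∈ I} → unitI) ×
      ({v : V // v ∉ I} → unitI) => eProd U (edgeFin H) (combine I p.1 p.2)) :=
    fun U => (measurable_eProd U _).comp (measurable_combine I)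
  set f : ({v : V // v ∈ I} → unitI) → ℝ :=
    fun x => ∫ z : {v : V // v ∉ I} → unitI, eProd W (edgeFin H) (combine I x z) with hf
  set g : ({v : V // v ∈ I} → unitI) → ℝ :=
    fun x => ∫ z : {v : V // v ∉ I} → unitI, eProd W.compl (edgeFin H) (combine I x z) with hg
  have hfm : StronglyMeasurable f := (hQ W).stronglyMeasurable.integral_prod_right'
  have hgm : StronglyMeasurable g := (hQ W.compl).stronglyMeasurable.integral_prod_right'
  have hbd : ∀ (U : Graphon) (x : {v : V // v ∈ I} → unitI),
      0 ≤ (∫ z : {v : V // v ∉ I} → unitI, eProd U (edgeFin H) (combine I x z)) ∧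
      (∫ z : {v : V // v ∉ I} → unitI, eProd U (edgeFin H) (combine I x z)) ≤ 1 := by
    intro U x
    have hzm : Measurable fun z : {v : V // v ∉ I} → unitI =>
        eProd U (edgeFin H) (combine I x z) :=
      (hQ U).comp (measurable_const.prodMk measurable_id)
    constructor
    · exact integral_nonneg fun z => eProd_nonneg _ _ _
    · have h1 : (∫ z : {v : V // v ∉ I} → unitI, eProd U (edgeFin H) (combine I x z))
          ≤ ∫ _z : {v : V // v ∉ I} → unitI, (1:ℝ) :=
        integral_mono
          (integrable_of_bdd hzm.aestronglyMeasurable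
            fun z => abs_le_one_of_bounds (eProd_nonneg _ _ _) (eProd_le_one _ _ _))
          (integrable_const 1) fun z => eProd_le_one _ _ _
      simpa using h1
  have hH' := hH W
  rw [homDensity_split H I W, homDensity_split H I W.compl] at hH'
  have key := final_ineq f g hfm hgm (fun x => (hbd W x).1) (fun x => (hbd W x).2)
    (fun x => (hbd W.compl x).1) (fun x => (hbd W.compl x).2) q (Nat.card H.edgeSet) hH'
  show (2:ℝ) ^ (1 - (Nat.card (book H I q).edgeSet : ℤ)) ≤ _
  rw [card_book_edges H I q hI, homDensity_book H I q hI W, homDensity_book H I q hI W.compl]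
  exact key
end

section
/- Let H be a connected graph on r vertices and suppose P_1,...,P_k are k internally vertex-disjoint paths from u to v in the auxiliary hypergraph H_q^r of standard H-copies in the q-bookpile H(q). Then there exist k internally vertex-disjoint paths Q_1,...,Q_k from u to v in the graph H(q), where each Q_i uses only vertices and edges lying in the standard copies of H corresponding to the hyperedges of P_i. -/
/-- A graph together with a labelling of its vertices by the vertices of an
original `r`-vertex graph, and, for each `e ∈ [q]^r`, the embedding of the
standard copy of the original graph indexed by `e`. -/
structure LGraph (q r : ℕ) where
  β : Type
  G : SimpleGraph β
  lab : β → Fin r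
  copy : (Fin r → Fin q) → Fin r → β

/-- Vertex set after taking the `q`-book along all copies of the vertex `i`. -/
def StepVerts {q r : ℕ} (X : LGraph q r) (i : Fin r) : Type :=
  {b : X.β // X.lab b = i} ⊕ (Fin q × {b : X.β // X.lab b ≠ i})

/-- Embedding of the `j`-th page into the book along copies of `i`. -/
def stepEmb {q r : ℕ} (X : LGraph q r) (i : Fin r) (j : Fin q) (b : X.β) :
    StepVerts X i :=
  if h : X.lab b = i then Sum.inl ⟨b, h⟩ else Sum.inr (j, ⟨b, h⟩)

lemma stepEmb_injective {q r : ℕ} (X : LGraph q r) (i : Fin r) (j : Fin q) :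
    Function.Injective (stepEmb X i j) := by
  intro a b hab
  unfold stepEmb at hab
  by_cases h1 : X.lab a = i <;> by_cases h2 : X.lab b = i <;>
    simp [h1, h2] at hab <;>
    (injection hab with h
     first
     | exact congrArg Subtype.val h
     | exact congrArg Subtype.val (congrArg Prod.snd h))

/-- One step of the bookpile construction: the `q`-book along all copies
of the vertex `i`. -/
def pileStep {q r : ℕ} (X : LGraph q r) (i : Fin r) : LGraph q r where
  β := StepVerts X i
  G := { Adj := fun a b => ∃ (j : Fin q) (u v : X.β),
            X.G.Adj u v ∧ a = stepEmb X i j u ∧ b = stepEmb X i j v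
         symm := ⟨by rintro a b ⟨j, u, v, h, ha, hb⟩; exact ⟨j, v, u, h.symm, hb, ha⟩⟩
         loopless := ⟨by
           rintro a ⟨j, u, v, h, ha, hb⟩
           exact X.G.loopless.irrefl v
             (by rwa [stepEmb_injective X i j (ha.symm.trans hb)] at h)⟩ }
  lab := Sum.elim (fun b => X.lab b.1) (fun p => X.lab p.2.1)
  copy := fun e v => stepEmb X i (e i) (X.copy e v)

/-- The `q`-bookpile `H(q)` of an `r`-vertex graph `H`: iterate the book
operation along the copies of each of the `r` vertices of `H`. -/
def bookpile {r : ℕ} (H : SimpleGraph (Fin r)) (q : ℕ) : LGraph q r :=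
  (List.finRange r).foldl pileStep ⟨Fin r, H, id, fun _ v => v⟩

/-- A path in a (linear) hypergraph with incidence relation `Inc`, from `u` to
`v`: an alternating sequence of vertices and edges where consecutive
vertex-pairs lie in the corresponding edge and non-consecutive edges are
disjoint. -/
structure HPath {Vt Et : Type} (Inc : Vt → Et → Prop) (u v : Vt) where
  len : ℕ
  vert : Fin (len + 1) → Vt
  edge : Fin len → Et
  first_eq : vert 0 = u
  last_eq : vert (Fin.last len) = v
  inc_left : ∀ i : Fin len, Inc (vert i.castSucc) (edge i)
  inc_right : ∀ i : Fin len, Inc (vert i.succ) (edge i)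
  nonconsec_disjoint : ∀ i j : Fin len, (i : ℕ) + 1 < (j : ℕ) →
    ∀ w, Inc w (edge i) → Inc w (edge j) → False

/-- Two `u`–`v` paths are internally vertex-disjoint: their first edges share
only `u`, their last edges share only `v`, and all other pairs of edges are
disjoint. -/
def HPath.IntDisj {Vt Et : Type} {Inc : Vt → Et → Prop} {u v : Vt}
    (P Q : HPath Inc u v) : Prop :=
  ∀ (i : Fin P.len) (j : Fin Q.len) (w : Vt),
    Inc w (P.edge i) → Inc w (Q.edge j) →
      ((i : ℕ) = 0 ∧ (j : ℕ) = 0 ∧ w = u) ∨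
      ((i : ℕ) + 1 = P.len ∧ (j : ℕ) + 1 = Q.len ∧ w = v)

/-- Two paths are vertex-disjoint: every edge of one is disjoint from every
edge of the other. -/
def HPath.VDisj {Vt Et : Type} {Inc : Vt → Et → Prop} {u v u' v' : Vt}
    (P : HPath Inc u v) (Q : HPath Inc u' v') : Prop :=
  ∀ (i : Fin P.len) (j : Fin Q.len) (w : Vt),
    Inc w (P.edge i) → Inc w (Q.edge j) → False

/-- Incidence relation of the auxiliary hypergraph of standard copies in the
`q`-bookpile: a vertex is incident to (the hyperedge indexed by) `e` iff it
lies in the standard copy indexed by `e`. -/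
def pileIncid {r : ℕ} (H : SimpleGraph (Fin r)) (q : ℕ)
    (b : (bookpile H q).β) (e : Fin r → Fin q) : Prop :=
  b ∈ Set.range ((bookpile H q).copy e)

lemma foldl_copy_hom {q r : ℕ} (H : SimpleGraph (Fin r)) (l : List (Fin r))
    (X : LGraph q r)
    (hX : ∀ (e : Fin r → Fin q) (a b : Fin r), H.Adj a b → X.G.Adj (X.copy e a) (X.copy e b)) :
    ∀ (e : Fin r → Fin q) (a b : Fin r), H.Adj a b →
      (l.foldl pileStep X).G.Adj ((l.foldl pileStep X).copy e a)
        ((l.foldl pileStep X).copy e b) := by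
  induction l generalizing X with
  | nil => exact hX
  | cons i l ih =>
    refine ih (pileStep X i) ?_
    intro e a b hab
    exact ⟨e i, X.copy e a, X.copy e b, hX e a b hab, rfl, rfl⟩

lemma bookpile_copy_hom {q r : ℕ} (H : SimpleGraph (Fin r)) (e : Fin r → Fin q)
    {a b : Fin r} (hab : H.Adj a b) :
    (bookpile H q).G.Adj ((bookpile H q).copy e a) ((bookpile H q).copy e b) :=
  foldl_copy_hom H (List.finRange r) ⟨Fin r, H, id, fun _ v => v⟩
    (fun _ _ _ h => h) e a b hab

/-- A walk within a single standard copy connecting two of its vertices. -/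
lemma segment_walk {r : ℕ} (H : SimpleGraph (Fin r)) (hconn : H.Connected) (q : ℕ)
    (e : Fin r → Fin q) (x y : (bookpile H q).β)
    (hx : pileIncid H q x e) (hy : pileIncid H q y e) :
    ∃ S : (bookpile H q).G.Walk x y,
      (∀ z ∈ S.support, pileIncid H q z e) ∧
      (∀ ed ∈ S.edges, ∃ a b : Fin r, H.Adj a b ∧
        ed = s((bookpile H q).copy e a, (bookpile H q).copy e b)) := by
  obtain ⟨a, ha⟩ := hx
  obtain ⟨b, hb⟩ := hy
  obtain ⟨p⟩ := hconn.preconnected a b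
  let f : H →g (bookpile H q).G :=
    ⟨(bookpile H q).copy e, fun h => bookpile_copy_hom H e h⟩
  refine ⟨((p.map f).copy ha hb), ?_, ?_⟩
  · intro z hz
    rw [SimpleGraph.Walk.support_copy, SimpleGraph.Walk.support_map] at hz
    obtain ⟨c, _, rfl⟩ := List.mem_map.mp hz
    exact ⟨c, rfl⟩
  · intro ed hed
    rw [SimpleGraph.Walk.edges_copy, SimpleGraph.Walk.edges_map] at hed
    obtain ⟨e', he', rfl⟩ := List.mem_map.mp hed
    obtain ⟨c, d, rfl⟩ := Sym2.exists.mp ⟨e', rfl⟩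
    exact ⟨c, d, p.adj_of_mem_edges he', Sym2.map_pair_eq f c d⟩

/-- A walk tracking a hypergraph path from position `t` to the end. -/
lemma hpath_tail_walk {r : ℕ} (H : SimpleGraph (Fin r)) (hconn : H.Connected) (q : ℕ)
    {u v : (bookpile H q).β} (P : HPath (pileIncid H q) u v) (hlen : 0 < P.len) :
    ∀ (n : ℕ) (t : Fin (P.len + 1)), (t : ℕ) + n = P.len →
    ∃ W : (bookpile H q).G.Walk (P.vert t) v,
      (∀ x ∈ W.support, ∃ m : Fin P.len, pileIncid H q x (P.edge m)) ∧
      (∀ ed ∈ W.edges, ∃ (m : Fin P.len) (a b : Fin r), H.Adj a b ∧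
        ed = s((bookpile H q).copy (P.edge m) a, (bookpile H q).copy (P.edge m) b)) := by
  intro n
  induction n with
  | zero =>
    intro t ht
    have htl : t = Fin.last P.len := Fin.ext (by simpa using ht)
    have hv : P.vert t = v := by rw [htl]; exact P.last_eq
    refine ⟨(SimpleGraph.Walk.nil : (bookpile H q).G.Walk v v).copy hv.symm rfl, ?_, ?_⟩
    · intro x hx
      rw [SimpleGraph.Walk.support_copy] at hx
      simp only [SimpleGraph.Walk.support_nil, List.mem_singleton] at hx
      subst hx
      refine ⟨⟨P.len - 1, by omega⟩, ?_⟩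
      have := P.inc_right ⟨P.len - 1, by omega⟩
      have hsucc : (⟨P.len - 1, by omega⟩ : Fin P.len).succ = Fin.last P.len :=
        Fin.ext (by simp; omega)
      rwa [hsucc, P.last_eq] at this
    · intro ed hed
      rw [SimpleGraph.Walk.edges_copy] at hed
      simp at hed
  | succ n ih =>
    intro t ht
    have hlt : (t : ℕ) < P.len := by omega
    set t' : Fin P.len := ⟨t, hlt⟩ with ht'
    have hc : t'.castSucc = t := Fin.ext rfl
    have hinc1 : pileIncid H q (P.vert t) (P.edge t') := by
      have := P.inc_left t'; rwa [hc] at this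
    have hinc2 : pileIncid H q (P.vert t'.succ) (P.edge t') := P.inc_right t'
    obtain ⟨S, hSsup, hSed⟩ := segment_walk H hconn q (P.edge t') _ _ hinc1 hinc2
    obtain ⟨W, hWsup, hWed⟩ := ih t'.succ (by have h2 : ((t'.castSucc : Fin (P.len+1)) : ℕ) = (t : ℕ) := rfl; show (t : ℕ) + 1 + n = P.len; omega)
    refine ⟨S.append W, ?_, ?_⟩
    · intro x hx
      rcases (SimpleGraph.Walk.mem_support_append_iff _ _).mp hx with h | h
      · exact ⟨t', hSsup x h⟩
      · exact hWsup x h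
    · intro ed hed
      rw [SimpleGraph.Walk.edges_append, List.mem_append] at hed
      rcases hed with h | h
      · obtain ⟨a, b, hab, hed⟩ := hSed ed h
        exact ⟨t', a, b, hab, hed⟩
      · exact hWed ed h

/-- internally vertex-disjoint paths in the auxiliary hypergraph
of standard copies yield internally vertex-disjoint paths in the bookpile graph
itself, each using only vertices and edges of the standard copies corresponding
to the hyperedges of the original path. -/
theorem hyp_paths_to_graph_paths {r : ℕ} (H : SimpleGraph (Fin r)) (hconn : H.Connected)
    (q k : ℕ) (u v : (bookpile H q).β) (huv : u ≠ v)
    (P : Fin k → HPath (pileIncid H q) u v)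
    (hP : ∀ i j, i ≠ j → (P i).IntDisj (P j)) :
    ∃ Q : Fin k → (bookpile H q).G.Walk u v,
      (∀ i, (Q i).IsPath) ∧
      (∀ i j, i ≠ j → ∀ x, x ∈ (Q i).support → x ∈ (Q j).support →
        x = u ∨ x = v) ∧
      (∀ i, ∀ x ∈ (Q i).support, ∃ m : Fin (P i).len, pileIncid H q x ((P i).edge m)) ∧
      (∀ i, ∀ ed ∈ (Q i).edges, ∃ (m : Fin (P i).len) (a b : Fin r),
        H.Adj a b ∧
          ed = s((bookpile H q).copy ((P i).edge m) a,
                 (bookpile H q).copy ((P i).edge m) b)) := by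
  classical
  have hlen : ∀ i, 0 < (P i).len := by
    intro i
    by_contra h
    push_neg at h
    apply huv
    have h1 := (P i).first_eq
    have h2 := (P i).last_eq
    have h3 : (P i).vert (Fin.last (P i).len) = (P i).vert 0 :=
      congrArg (P i).vert (Fin.ext (by simp; omega))
    rw [h3, h1] at h2
    -- h2 : u = v
    exact h2
  have hW : ∀ i, ∃ W : (bookpile H q).G.Walk u v,
      (∀ x ∈ W.support, ∃ m : Fin (P i).len, pileIncid H q x ((P i).edge m)) ∧
      (∀ ed ∈ W.edges, ∃ (m : Fin (P i).len) (a b : Fin r), H.Adj a b ∧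
        ed = s((bookpile H q).copy ((P i).edge m) a,
               (bookpile H q).copy ((P i).edge m) b)) := by
    intro i
    obtain ⟨W, h1, h2⟩ := hpath_tail_walk H hconn q (P i) (hlen i) (P i).len 0 (by simp)
    refine ⟨W.copy (P i).first_eq rfl, ?_, ?_⟩
    · intro x hx; rw [SimpleGraph.Walk.support_copy] at hx; exact h1 x hx
    · intro ed hed; rw [SimpleGraph.Walk.edges_copy] at hed; exact h2 ed hed
  choose W hWsup hWed using hW
  refine ⟨fun i => (W i).bypass, fun i => (W i).bypass_isPath, ?_, ?_, ?_⟩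
  · intro i j hij x hxi hxj
    obtain ⟨m, hm⟩ := hWsup i x ((W i).support_bypass_subset hxi)
    obtain ⟨n, hn⟩ := hWsup j x ((W j).support_bypass_subset hxj)
    rcases hP i j hij m n x hm hn with ⟨_, _, h⟩ | ⟨_, _, h⟩
    · exact Or.inl h
    · exact Or.inr h
  · intro i x hx
    exact hWsup i x ((W i).support_bypass_subset hx)
  · intro i ed hed
    exact hWed i ed ((W i).edges_bypass_subset hed)
end
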